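/- Let n, a, b, c, e be positive integers with e < a ≤ b ≤ n/2 < c < n, c − b = a − e, a > 2e, and set s = ⌊b/a⌋ ≥ 2. Suppose that for every t ∈ [0, ⌊s/2⌋ − 1], the interval [(2s−2t−1)n/(2b), (s−t)n/b] contains no integer coprime to n, where n is a product of three distinct primes each ≥ 5. Then each such interval contains at most 3 integers, and consequently n/(2b) < 4. -/

import Mathlib

lemma four_consec_avoid (p₁ p₂ p₃ : ℕ) (h5₁ : 5 ≤ p₁) (h5₂ : 5 ≤ p₂) (h5₃ : 5 ≤ p₃)
    (m : ℤ) : ∃ i : Fin 4, ¬((p₁ : ℤ) ∣ m + i) ∧ ¬((p₂ : ℤ) ∣ m + i) ∧ ¬((p₃ : ℤ) ∣ m + i) := by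
  by_contra hc
  push_neg at hc
  have h : ∀ i : Fin 4, (p₁ : ℤ) ∣ m + i ∨ (p₂ : ℤ) ∣ m + i ∨ (p₃ : ℤ) ∣ m + i := by
    intro i; by_cases h1 : (p₁ : ℤ) ∣ m + i
    · exact Or.inl h1
    · by_cases h2 : (p₂ : ℤ) ∣ m + i
      · exact Or.inr (Or.inl h2)
      · exact Or.inr (Or.inr (hc i h1 h2))
  classical
  let g : Fin 4 → Fin 3 := fun i => if (p₁ : ℤ) ∣ m + i then 0 else if (p₂ : ℤ) ∣ m + i then 1 else 2
  obtain ⟨i, j, hij, hg⟩ := Fintype.exists_ne_map_eq_of_card_lt g (by norm_num)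
  have key : ∀ p : ℕ, 5 ≤ p → (p : ℤ) ∣ m + i → (p : ℤ) ∣ m + j → False := by
    intro p hp hdi hdj
    have hd : (p : ℤ) ∣ ((i : ℤ) - (j : ℤ)) := by
      have := dvd_sub hdi hdj; simpa using this
    have hne : ((i : ℤ) - (j : ℤ)) ≠ 0 := by
      intro h0
      apply hij
      have : (i : ℤ) = (j : ℤ) := by linarith [sub_eq_zero.mp h0]
      exact Fin.ext (by exact_mod_cast this)
    have hle : (p : ℤ) ≤ |(i : ℤ) - (j : ℤ)| := Int.le_of_dvd (abs_pos.mpr hne) ((dvd_abs _ _).mpr hd)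
    have hi4 : (i : ℤ) < 4 := by exact_mod_cast i.isLt
    have hj4 : (j : ℤ) < 4 := by exact_mod_cast j.isLt
    have hi0 : (0 : ℤ) ≤ (i : ℤ) := by positivity
    have hj0 : (0 : ℤ) ≤ (j : ℤ) := by positivity
    have : |(i : ℤ) - (j : ℤ)| ≤ 3 := by rw [abs_le]; omega
    omega
  simp only [g] at hg
  rcases h i with h1 | h2 | h3
  · rcases h j with k1 | k2 | k3
    · exact key p₁ h5₁ h1 k1
    · simp [h1, k2] at hg
      by_cases hj1 : (p₁ : ℤ) ∣ m + j
      · exact key p₁ h5₁ h1 hj1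
      · simp [h1, hj1, k2] at hg
    · by_cases hj1 : (p₁ : ℤ) ∣ m + j
      · exact key p₁ h5₁ h1 hj1
      · by_cases hj2 : (p₂ : ℤ) ∣ m + j
        · simp [h1, hj1, hj2] at hg
        · simp [h1, hj1, hj2] at hg
  · by_cases hi1 : (p₁ : ℤ) ∣ m + i
    · by_cases hj1 : (p₁ : ℤ) ∣ m + j
      · exact key p₁ h5₁ hi1 hj1
      · by_cases hj2 : (p₂ : ℤ) ∣ m + j
        · simp [hi1, hj1, hj2] at hg
        · simp [hi1, hj1, hj2] at hg
    · by_cases hj1 : (p₁ : ℤ) ∣ m + j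
      · simp [hi1, h2, hj1] at hg
      · by_cases hj2 : (p₂ : ℤ) ∣ m + j
        · exact key p₂ h5₂ h2 hj2
        · simp [hi1, h2, hj1, hj2] at hg
  · by_cases hi1 : (p₁ : ℤ) ∣ m + i
    · by_cases hj1 : (p₁ : ℤ) ∣ m + j
      · exact key p₁ h5₁ hi1 hj1
      · by_cases hj2 : (p₂ : ℤ) ∣ m + j
        · simp [hi1, hj1, hj2] at hg
        · simp [hi1, hj1, hj2] at hg
    · by_cases hi2 : (p₂ : ℤ) ∣ m + i
      · by_cases hj1 : (p₁ : ℤ) ∣ m + j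
        · simp [hi1, hi2, hj1] at hg
        · by_cases hj2 : (p₂ : ℤ) ∣ m + j
          · exact key p₂ h5₂ hi2 hj2
          · simp [hi1, hi2, hj1, hj2] at hg
      · by_cases hj1 : (p₁ : ℤ) ∣ m + j
        · simp [hi1, hi2, hj1] at hg
        · by_cases hj2 : (p₂ : ℤ) ∣ m + j
          · simp [hi1, hi2, hj1, hj2] at hg
          · exact key p₃ h5₃ h3 (by
              rcases h j with k1 | k2 | k3
              · exact absurd k1 hj1
              · exact absurd k2 hj2
              · exact k3)

theorem at_most_three_integers (p₁ p₂ p₃ n e a b c s : ℕ)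
    (hp₁ : p₁.Prime) (hp₂ : p₂.Prime) (hp₃ : p₃.Prime)
    (h5₁ : 5 ≤ p₁) (h5₂ : 5 ≤ p₂) (h5₃ : 5 ≤ p₃)
    (h12 : p₁ ≠ p₂) (h13 : p₁ ≠ p₃) (h23 : p₂ ≠ p₃)
    (hn : n = p₁ * p₂ * p₃)
    (he : 0 < e) (hea : e < a) (hab : a ≤ b) (hbn : 2 * b ≤ n) (hcn1 : n < 2 * c)
    (hcn2 : c < n) (hdiff : c + e = a + b) (hae : 2 * e < a)
    (hs : s = b / a) (hs2 : 2 ≤ s)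
    (hnocop : ∀ t : ℕ, t + 1 ≤ s / 2 →
      ¬ ∃ z : ℤ, Int.gcd z n = 1 ∧
        ((2 * (s : ℚ) - 2 * t - 1) * n) / (2 * b) ≤ (z : ℚ) ∧
        (z : ℚ) ≤ (((s : ℚ) - t) * n) / b) :
    (∀ t : ℕ, t + 1 ≤ s / 2 →
      (Finset.Icc ⌈((2 * (s : ℚ) - 2 * t - 1) * n) / (2 * b)⌉
        ⌊(((s : ℚ) - t) * n) / b⌋).card ≤ 3) ∧
    (n : ℚ) < 8 * b := by
  have hb : 0 < b := lt_of_lt_of_le (he.trans hea) hab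
  have hbQ : (0 : ℚ) < (b : ℚ) := by exact_mod_cast hb
  have hmain : ∀ t : ℕ, t + 1 ≤ s / 2 →
      (Finset.Icc ⌈((2 * (s : ℚ) - 2 * t - 1) * n) / (2 * b)⌉
        ⌊(((s : ℚ) - t) * n) / b⌋).card ≤ 3 := by
    intro t ht
    by_contra hcard
    push_neg at hcard
    set x : ℚ := ((2 * (s : ℚ) - 2 * t - 1) * n) / (2 * b) with hx
    set y : ℚ := (((s : ℚ) - t) * n) / b with hy
    have hcardeq : (Finset.Icc ⌈x⌉ ⌊y⌋).card = (⌊y⌋ + 1 - ⌈x⌉).toNat := Int.card_Icc _ _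
    have hge : ⌈x⌉ + 3 ≤ ⌊y⌋ := by
      rw [hcardeq] at hcard
      omega
    obtain ⟨i, hi1, hi2, hi3⟩ := four_consec_avoid p₁ p₂ p₃ h5₁ h5₂ h5₃ ⌈x⌉
    set z : ℤ := ⌈x⌉ + (i : ℤ) with hz
    have hi4 : (i : ℤ) < 4 := by exact_mod_cast i.isLt
    have hi0 : (0 : ℤ) ≤ (i : ℤ) := by positivity
    apply hnocop t ht
    refine ⟨z, ?_, ?_, ?_⟩
    · -- gcd z n = 1
      rw [← Int.isCoprime_iff_gcd_eq_one]
      have c1 : IsCoprime (z : ℤ) (p₁ : ℤ) :=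
        (((Nat.prime_iff_prime_int.mp hp₁).coprime_iff_not_dvd).mpr hi1).symm
      have c2 : IsCoprime (z : ℤ) (p₂ : ℤ) :=
        (((Nat.prime_iff_prime_int.mp hp₂).coprime_iff_not_dvd).mpr hi2).symm
      have c3 : IsCoprime (z : ℤ) (p₃ : ℤ) :=
        (((Nat.prime_iff_prime_int.mp hp₃).coprime_iff_not_dvd).mpr hi3).symm
      have : IsCoprime (z : ℤ) ((p₁ : ℤ) * p₂ * p₃) := ((c1.mul_right c2).mul_right c3)
      rw [hn]
      push_cast
      exact this
    · have hz' : (⌈x⌉ : ℤ) ≤ z := by omega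
      calc x ≤ ((⌈x⌉ : ℤ) : ℚ) := Int.le_ceil x
        _ ≤ (z : ℚ) := by exact_mod_cast hz'
    · calc (z : ℚ) ≤ ((⌊y⌋ : ℤ) : ℚ) := by
            have : z ≤ ⌊y⌋ := by omega
            exact_mod_cast this
        _ ≤ y := Int.floor_le y
  refine ⟨hmain, ?_⟩
  by_contra h8
  push_neg at h8
  have ht0 : (0 : ℕ) + 1 ≤ s / 2 := by omega
  have hc := hmain 0 ht0
  set x : ℚ := ((2 * (s : ℚ) - 2 * (0:ℕ) - 1) * n) / (2 * b) with hx
  set y : ℚ := (((s : ℚ) - (0:ℕ)) * n) / b with hy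
  have hdiff4 : x + 4 ≤ y := by
    have hyx : y - x = (n : ℚ) / (2 * b) := by
      rw [hx, hy]
      push_cast
      field_simp
      ring
    have : (4 : ℚ) ≤ (n : ℚ) / (2 * b) := by
      rw [le_div_iff₀ (by positivity)]
      linarith
    linarith
  have hfl : ⌈x⌉ + 3 ≤ ⌊y⌋ := by
    have h1 : ⌈x⌉ ≤ ⌊x⌋ + 1 := Int.ceil_le_floor_add_one x
    have h2 : ⌊x⌋ + 4 = ⌊x + 4⌋ := by
      rw [show (4 : ℚ) = ((4 : ℤ) : ℚ) by norm_num, Int.floor_add_intCast]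
    have h3 : ⌊x + 4⌋ ≤ ⌊y⌋ := Int.floor_le_floor hdiff4
    omega
  rw [Int.card_Icc] at hc
  omega
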